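/- Let w, a, α, γ₁, γ₂, m, b, b₁, b₂ be real numbers with w > 0, w ≠ 1, a ≠ 0, b ≠ 0, and b₁ + b₂ = m·b. Then, as ε → 0 through nonzero values, the function ε ↦ (w−1)²/(w^(ε·b)−1) · [ w^(α·(a+ε·b₁)+ε·γ₁·b)/(w^(a+ε·b₁)−1) + w^((1−α)·(−a+ε·b₂)+ε·γ₂·b)/(w^(−a+ε·b₂)−1) ] tends to w^(α·a)·(w−1)²·((γ₁−γ₂−(1−α)·m)·(w^a−1) − m)/(w^a−1)². In particular the limit exists and depends on b, b₁, b₂ only through m = (b₁+b₂)/b. -/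

import Mathlib

open Filter Topology

set_option maxHeartbeats 1600000

private lemma hasDerivAt_rpow_affine {w : ℝ} (hw : 0 < w) (c d : ℝ) :
    HasDerivAt (fun ε : ℝ => w ^ (c + ε * d)) (w ^ c * Real.log w * d) 0 := by
  have h1 : HasDerivAt (fun ε : ℝ => c + ε * d) d 0 := by
    simpa using ((hasDerivAt_id (0 : ℝ)).mul_const d).const_add c
  have h2 : HasDerivAt (fun x : ℝ => w ^ x) (w ^ ((c : ℝ) + 0 * d) * Real.log w)
      ((c : ℝ) + 0 * d) := (Real.hasStrictDerivAt_const_rpow hw _).hasDerivAt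
  simpa [Function.comp_def] using h2.comp 0 h1

theorem rotation_contribution_limit
    (w a α γ₁ γ₂ m b b₁ b₂ : ℝ) (hw : 0 < w) (hw1 : w ≠ 1)
    (ha : a ≠ 0) (hb : b ≠ 0) (hnull : b₁ + b₂ = m * b) :
    Tendsto
      (fun ε : ℝ =>
        (w - 1) ^ 2 / (w ^ (ε * b) - 1) *
          (w ^ (α * (a + ε * b₁) + ε * γ₁ * b) / (w ^ (a + ε * b₁) - 1) +
           w ^ ((1 - α) * (-a + ε * b₂) + ε * γ₂ * b) / (w ^ (-a + ε * b₂) - 1)))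
      (𝓝[≠] (0 : ℝ))
      (𝓝 (w ^ (α * a) * (w - 1) ^ 2 *
        ((γ₁ - γ₂ - (1 - α) * m) * (w ^ a - 1) - m) / (w ^ a - 1) ^ 2)) := by
  have hw0 : w ≠ 0 := ne_of_gt hw
  set L := Real.log w with hLdef
  have hL0 : L ≠ 0 := Real.log_ne_zero_of_pos_of_ne_one hw hw1
  have key : ∀ x : ℝ, x ≠ 0 → w ^ x - 1 ≠ 0 := by
    intro x hx
    refine sub_ne_zero.mpr ?_
    rw [Real.rpow_def_of_pos hw]
    rw [Ne, Real.exp_eq_one_iff]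
    exact mul_ne_zero hL0 hx
  have hA0 : (w : ℝ) ^ a ≠ 0 := (Real.rpow_pos_of_pos hw a).ne'
  have hA1 : w ^ a - 1 ≠ 0 := key a ha
  have hA1' : w ^ (-a) - 1 ≠ 0 := key (-a) (neg_ne_zero.mpr ha)
  -- the two quotient functions
  set F : ℝ → ℝ := fun ε =>
      w ^ (α * (a + ε * b₁) + ε * γ₁ * b) / (w ^ (a + ε * b₁) - 1) +
      w ^ ((1 - α) * (-a + ε * b₂) + ε * γ₂ * b) / (w ^ (-a + ε * b₂) - 1) with hFdef
  set G : ℝ → ℝ := fun ε => w ^ (ε * b) - 1 with hGdef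
  have hmaa : w ^ (α * a - a) = w ^ (α * a) / w ^ a := Real.rpow_sub hw _ _
  have hman : w ^ (-a) = (w ^ a)⁻¹ := Real.rpow_neg hw.le a
  have hF0 : F 0 = 0 := by
    have e1 : α * (a + (0:ℝ) * b₁) + (0:ℝ) * γ₁ * b = α * a := by ring
    have e2 : (1 - α) * (-a + (0:ℝ) * b₂) + (0:ℝ) * γ₂ * b = α * a - a := by ring
    have e3 : a + (0:ℝ) * b₁ = a := by ring
    have e4 : -a + (0:ℝ) * b₂ = -a := by ring
    simp only [hFdef]
    rw [e1, e2, e3, e4, hmaa, hman]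
    have h1A : 1 - w ^ a ≠ 0 := fun h => hA1 (by linarith)
    field_simp
    ring
  -- derivative of F at 0
  have hN1 : HasDerivAt (fun ε : ℝ => w ^ (α * (a + ε * b₁) + ε * γ₁ * b))
      (w ^ (α * a) * L * (α * b₁ + γ₁ * b)) 0 := by
    have h := hasDerivAt_rpow_affine hw (α * a) (α * b₁ + γ₁ * b)
    have : (fun ε : ℝ => w ^ (α * a + ε * (α * b₁ + γ₁ * b)))
        = fun ε : ℝ => w ^ (α * (a + ε * b₁) + ε * γ₁ * b) := by
      funext ε; congr 1; ring
    rwa [this] at h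
  have hD1 : HasDerivAt (fun ε : ℝ => w ^ (a + ε * b₁) - 1) (w ^ a * L * b₁) 0 := by
    have h := (hasDerivAt_rpow_affine hw a b₁).sub_const 1
    exact h
  have hN2 : HasDerivAt (fun ε : ℝ => w ^ ((1 - α) * (-a + ε * b₂) + ε * γ₂ * b))
      (w ^ (α * a - a) * L * ((1 - α) * b₂ + γ₂ * b)) 0 := by
    have h := hasDerivAt_rpow_affine hw (α * a - a) ((1 - α) * b₂ + γ₂ * b)
    have : (fun ε : ℝ => w ^ (α * a - a + ε * ((1 - α) * b₂ + γ₂ * b)))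
        = fun ε : ℝ => w ^ ((1 - α) * (-a + ε * b₂) + ε * γ₂ * b) := by
      funext ε; congr 1; ring
    rwa [this] at h
  have hD2 : HasDerivAt (fun ε : ℝ => w ^ (-a + ε * b₂) - 1) (w ^ (-a) * L * b₂) 0 :=
    (hasDerivAt_rpow_affine hw (-a) b₂).sub_const 1
  have hden10 : w ^ (a + (0:ℝ) * b₁) - 1 ≠ 0 := by
    have : a + (0:ℝ) * b₁ = a := by ring
    rw [this]; exact hA1
  have hden20 : w ^ (-a + (0:ℝ) * b₂) - 1 ≠ 0 := by
    have : -a + (0:ℝ) * b₂ = -a := by ring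
    rw [this]; exact hA1'
  have hQ1 := hN1.div hD1 hden10
  have hQ2 := hN2.div hD2 hden20
  have hF := hQ1.add hQ2
  set d₀ : ℝ := (w ^ (α * a) * L * (α * b₁ + γ₁ * b) * (w ^ (a + (0:ℝ) * b₁) - 1)
        - w ^ (α * (a + (0:ℝ) * b₁) + (0:ℝ) * γ₁ * b) * (w ^ a * L * b₁))
        / (w ^ (a + (0:ℝ) * b₁) - 1) ^ 2
      + (w ^ (α * a - a) * L * ((1 - α) * b₂ + γ₂ * b) * (w ^ (-a + (0:ℝ) * b₂) - 1)
        - w ^ ((1 - α) * (-a + (0:ℝ) * b₂) + (0:ℝ) * γ₂ * b) * (w ^ (-a) * L * b₂))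
        / (w ^ (-a + (0:ℝ) * b₂) - 1) ^ 2 with hd0def
  have hFd : HasDerivAt F d₀ 0 := hF
  have hG : HasDerivAt G (L * b) 0 := by
    have h := (hasDerivAt_rpow_affine hw 0 b).sub_const 1
    have e : (fun ε : ℝ => w ^ ((0:ℝ) + ε * b) - 1) = G := by
      funext ε; rw [hGdef]; congr 2; ring
    rw [e] at h
    simpa using h
  have hG0 : G 0 = 0 := by simp [hGdef]
  -- slopes
  have hFs : Tendsto (fun ε : ℝ => F ε / ε) (𝓝[≠] (0:ℝ)) (𝓝 d₀) := by
    have := hasDerivAt_iff_tendsto_slope.mp hFd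
    refine this.congr' ?_
    filter_upwards [self_mem_nhdsWithin] with ε hε
    simp [slope_def_field, hF0, sub_zero]
  have hGs : Tendsto (fun ε : ℝ => G ε / ε) (𝓝[≠] (0:ℝ)) (𝓝 (L * b)) := by
    have := hasDerivAt_iff_tendsto_slope.mp hG
    refine this.congr' ?_
    filter_upwards [self_mem_nhdsWithin] with ε hε
    simp [slope_def_field, hG0, sub_zero]
  have hLb : L * b ≠ 0 := mul_ne_zero hL0 hb
  have hmain : Tendsto (fun ε : ℝ => (w - 1) ^ 2 * ((F ε / ε) / (G ε / ε)))
      (𝓝[≠] (0:ℝ)) (𝓝 ((w - 1) ^ 2 * (d₀ / (L * b)))) :=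
    (hFs.div hGs hLb).const_mul _
  have heq : ∀ᶠ ε in 𝓝[≠] (0:ℝ),
      (w - 1) ^ 2 * ((F ε / ε) / (G ε / ε))
        = (w - 1) ^ 2 / G ε * F ε := by
    filter_upwards [self_mem_nhdsWithin] with ε hε
    have hε0 : ε ≠ 0 := hε
    have hdd : (F ε / ε) / (G ε / ε) = F ε / G ε := by
      rcases eq_or_ne (G ε) 0 with h | h
      · simp [h]
      · field_simp
    rw [hdd]
    ring
  have hfinal : Tendsto (fun ε : ℝ => (w - 1) ^ 2 / G ε * F ε)
      (𝓝[≠] (0:ℝ)) (𝓝 ((w - 1) ^ 2 * (d₀ / (L * b)))) := by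
    exact hmain.congr' heq
  -- identify the limit value
  have hval : (w - 1) ^ 2 * (d₀ / (L * b))
      = w ^ (α * a) * (w - 1) ^ 2 *
        ((γ₁ - γ₂ - (1 - α) * m) * (w ^ a - 1) - m) / (w ^ a - 1) ^ 2 := by
    have e1 : α * (a + (0:ℝ) * b₁) + (0:ℝ) * γ₁ * b = α * a := by ring
    have e2 : (1 - α) * (-a + (0:ℝ) * b₂) + (0:ℝ) * γ₂ * b = α * a - a := by ring
    have e3 : a + (0:ℝ) * b₁ = a := by ring
    have e4 : -a + (0:ℝ) * b₂ = -a := by ring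
    have hb2 : b₂ = m * b - b₁ := by linarith
    rw [hd0def, e1, e2, e3, e4, hmaa, hman, hb2]
    have h1A : 1 - w ^ a ≠ 0 := fun h => hA1 (by linarith)
    field_simp
    ring
  rw [← hval]
  exact hfinal
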